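/- arXiv:1212.0457 — 8 statements merged into one kernel-verified Lean document; each statement's English description precedes it below -/
import Mathlib

section
/- Let G be a group and A a nonempty finite subset of G. If |AA^{-1}| = |A|, then AA^{-1} is a subgroup of G and A is a left coset of it (i.e., A = a(A^{-1}A) = (AA^{-1})a for any a ∈ A; in particular A is contained in a left coset of a subgroup of size |A|). -/
open Finset Pointwise

theorem stmt0 {G : Type*} [Group G] [DecidableEq G] (A : Finset G)
    (hA : A.Nonempty) (h : (A * A⁻¹).card = A.card) :
    (∃ H : Subgroup G, (↑(A * A⁻¹) : Set G) = ↑H) ∧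
      ∀ a ∈ A, A = a • (A⁻¹ * A) ∧ A = (A * A⁻¹) * {a} := by
  -- key: for every a ∈ A, A * A⁻¹ = A * {a⁻¹}
  have key : ∀ a ∈ A, A * A⁻¹ = A * {a⁻¹} := by
    intro a ha
    refine (Finset.eq_of_subset_of_card_le ?_ ?_).symm
    · exact Finset.mul_subset_mul_left (by simpa using Finset.inv_mem_inv ha)
    · rw [h, Finset.mul_singleton]
      simp
  have key2 : ∀ a ∈ A, A * A⁻¹ = {a} * A⁻¹ := by
    intro a ha
    have h1 := key a ha
    have : (A * A⁻¹)⁻¹ = (A * {a⁻¹})⁻¹ := by rw [h1]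
    simpa [mul_inv_rev] using this
  obtain ⟨a0, ha0⟩ := hA
  have hSS : (A * A⁻¹) * (A * A⁻¹) = A * A⁻¹ := by
    calc (A * A⁻¹) * (A * A⁻¹) = (A * {a0⁻¹}) * ({a0} * A⁻¹) := by
          rw [← key a0 ha0, ← key2 a0 ha0]
      _ = A * (({a0⁻¹} * {a0}) * A⁻¹) := by
          rw [mul_assoc, ← mul_assoc ({a0⁻¹} : Finset G)]
      _ = A * A⁻¹ := by
          rw [Finset.singleton_mul_singleton, inv_mul_cancel, Finset.singleton_one, one_mul]
  have hSinv : (A * A⁻¹)⁻¹ = A * A⁻¹ := by simp [mul_inv_rev]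
  have hone : (1 : G) ∈ A * A⁻¹ := by
    have := Finset.mul_mem_mul ha0 (Finset.inv_mem_inv ha0)
    simpa using this
  refine ⟨⟨{ carrier := ↑(A * A⁻¹)
           , mul_mem' := ?_
           , one_mem' := by exact_mod_cast hone
           , inv_mem' := ?_ }, rfl⟩, ?_⟩
  · intro x y hx hy
    have : x * y ∈ (A * A⁻¹) * (A * A⁻¹) :=
      Finset.mul_mem_mul (by exact_mod_cast hx) (by exact_mod_cast hy)
    rw [hSS] at this
    exact_mod_cast this
  · intro x hx
    have : x⁻¹ ∈ (A * A⁻¹)⁻¹ := by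
      simpa using Finset.inv_mem_inv (by exact_mod_cast hx : x ∈ A * A⁻¹)
    rw [hSinv] at this
    exact_mod_cast this
  · intro a ha
    have h1 : A * A⁻¹ = A * {a⁻¹} := key a ha
    have hA2 : A = (A * A⁻¹) * {a} := by
      rw [h1, mul_assoc, Finset.singleton_mul_singleton, inv_mul_cancel,
        Finset.singleton_one, mul_one]
    refine ⟨?_, hA2⟩
    have hinv : A⁻¹ = {a⁻¹} * (A * A⁻¹) := by
      conv_lhs => rw [hA2]
      rw [mul_inv_rev, hSinv, Finset.inv_singleton]
    have h3 : (A * A⁻¹) * A = A := by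
      calc (A * A⁻¹) * A = (A * A⁻¹) * ((A * A⁻¹) * {a}) := by rw [← hA2]
        _ = ((A * A⁻¹) * (A * A⁻¹)) * {a} := by rw [mul_assoc (A * A⁻¹) (A * A⁻¹) {a}]
        _ = (A * A⁻¹) * {a} := by rw [hSS]
        _ = A := hA2.symm
    have : {a} * (A⁻¹ * A) = A := by
      rw [hinv, mul_assoc {a⁻¹} (A * A⁻¹) A, h3, ← mul_assoc,
        Finset.singleton_mul_singleton, mul_inv_cancel, Finset.singleton_one, one_mul]
    rw [← Finset.singleton_mul, this]
end

section
/- Let G be a group and A a nonempty finite subset of G with |AA^{-1}| ≤ K|A| for some real K < 1.5. Then for every x ∈ A^{-1}A, the number of pairs (a, a') ∈ A × A with a^{-1}a' = x is at least (2 - K)|A|, and in particular is greater than |A|/2. -/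
open Finset Pointwise

theorem stmt1 {G : Type*} [Group G] [DecidableEq G] (A : Finset G) (K : ℝ)
    (hA : A.Nonempty) (hK : K < 1.5)
    (h : ((A * A⁻¹).card : ℝ) ≤ K * A.card) :
    ∀ x ∈ A⁻¹ * A,
      (2 - K) * A.card ≤ (((A ×ˢ A).filter (fun p => p.1⁻¹ * p.2 = x)).card : ℝ) ∧
      (A.card : ℝ) / 2 < (((A ×ˢ A).filter (fun p => p.1⁻¹ * p.2 = x)).card : ℝ) := by
  intro x hx
  obtain ⟨u, hu, c, hc, rfl⟩ := Finset.mem_mul.1 hx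
  obtain ⟨b, hb, rfl⟩ := Finset.mem_inv.1 hu
  set S := (A * {b⁻¹}) ∩ (A * {c⁻¹}) with hS
  have hmain : (2 - K) * A.card ≤
      (((A ×ˢ A).filter (fun p => p.1⁻¹ * p.2 = b⁻¹ * c)).card : ℝ) := by
    have hsub1 : A * ({b⁻¹} : Finset G) ⊆ A * A⁻¹ :=
      mul_subset_mul_left (by simpa using Finset.inv_mem_inv hb)
    have hsub2 : A * ({c⁻¹} : Finset G) ⊆ A * A⁻¹ :=
      mul_subset_mul_left (by simpa using Finset.inv_mem_inv hc)
    have hunion : (A * {b⁻¹}) ∪ (A * {c⁻¹}) ⊆ A * A⁻¹ :=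
      Finset.union_subset hsub1 hsub2
    have hcard1 : (A * ({b⁻¹} : Finset G)).card = A.card := by
      simp [Finset.mul_singleton, Finset.card_image_of_injective _
        (mul_left_injective _)]
    have hcard2 : (A * ({c⁻¹} : Finset G)).card = A.card := by
      simp [Finset.mul_singleton, Finset.card_image_of_injective _
        (mul_left_injective _)]
    have hIE : ((A * {b⁻¹}) ∪ (A * {c⁻¹})).card + S.card = A.card + A.card := by
      rw [hS, Finset.card_union_add_card_inter, hcard1, hcard2]
    have hSle : S.card ≤ ((A ×ˢ A).filter (fun p => p.1⁻¹ * p.2 = b⁻¹ * c)).card := by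
      apply Finset.card_le_card_of_injOn (fun y => (y * b, y * c))
      · intro y hy
        rw [hS, Finset.mem_coe, Finset.mem_inter] at hy
        obtain ⟨h1, h2⟩ := hy
        rw [Finset.mem_mul] at h1 h2
        obtain ⟨a1, ha1, w1, hw1, rfl⟩ := h1
        obtain ⟨a2, ha2, w2, hw2, he⟩ := h2
        rw [Finset.mem_singleton] at hw1 hw2
        subst hw1; subst hw2
        simp only [Finset.mem_coe, Finset.mem_filter, Finset.mem_product]
        constructor
        · constructor
          · simpa using ha1
          · have : a1 * b⁻¹ * c = a2 := by
              rw [← he, mul_assoc, inv_mul_cancel, mul_one]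
            rw [this]; exact ha2
        · group
      · intro y _ z _ hyz
        have := congrArg Prod.fst hyz
        simpa using this
    have hU : (((A * {b⁻¹}) ∪ (A * {c⁻¹})).card : ℝ) ≤ K * A.card :=
      le_trans (by exact_mod_cast Finset.card_le_card hunion) h
    have : (2 : ℝ) * A.card - K * A.card ≤ S.card := by
      have := congrArg (fun n : ℕ => (n : ℝ)) hIE
      push_cast at this
      linarith
    calc (2 - K) * A.card = 2 * A.card - K * A.card := by ring
    _ ≤ (S.card : ℝ) := this
    _ ≤ _ := by exact_mod_cast hSle
  refine ⟨hmain, lt_of_lt_of_le ?_ hmain⟩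
  have hpos : (0 : ℝ) < A.card := by exact_mod_cast Finset.card_pos.2 hA
  nlinarith
end

section
/- Let G be a group and A a nonempty finite subset of G with |AA^{-1}| ≤ K|A| for some K < 1.5. Then A^{-1}A is a subgroup of G of size at most K|A|, and A is contained in a single left coset of A^{-1}A. -/
open Finset Pointwise

theorem stmt3 {G : Type*} [Group G] [DecidableEq G] (A : Finset G) (K : ℝ)
    (hA : A.Nonempty) (hK : K < 1.5)
    (h : ((A * A⁻¹).card : ℝ) ≤ K * A.card) :
    (∃ H : Subgroup G, (↑(A⁻¹ * A) : Set G) = ↑H) ∧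
      ((A⁻¹ * A).card : ℝ) ≤ K * A.card ∧
      ∃ a : G, (A : Set G) ⊆ a • (↑(A⁻¹ * A) : Set G) := by
  classical
  obtain ⟨a₀, ha₀⟩ := hA
  have hn0 : 0 < A.card := Finset.card_pos.mpr ⟨a₀, ha₀⟩
  have h2m3n : 2 * (A * A⁻¹).card < 3 * A.card := by
    have hn' : (0:ℝ) < (A.card : ℝ) := by exact_mod_cast hn0
    have h1 : ((A * A⁻¹).card : ℝ) < 1.5 * A.card := lt_of_le_of_lt h (by nlinarith)
    have h2 : (2 * (A * A⁻¹).card : ℝ) < 3 * A.card := by nlinarith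
    exact_mod_cast h2
  -- general intersection lemma
  have inter_le : ∀ (S T U : Finset G), S ⊆ U → T ⊆ U →
      S.card + T.card ≤ U.card + (S ∩ T).card := by
    intro S T U hS hT
    have h1 := Finset.card_union_add_card_inter S T
    have h2 : (S ∪ T).card ≤ U.card := Finset.card_le_card (Finset.union_subset hS hT)
    omega
  -- injectivity helpers
  have injL : ∀ a : G, Function.Injective (fun x : G => a * x⁻¹) :=
    fun a x y hxy => inv_injective (mul_left_cancel hxy)
  have injR : ∀ c : G, Function.Injective (fun x : G => x * c⁻¹) :=
    fun c x y hxy => mul_right_cancel hxy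
  have injI : ∀ g : G, Function.Injective (fun x : G => x⁻¹ * g) :=
    fun g x y hxy => inv_injective (mul_right_cancel hxy)
  -- translate subsets of A * A⁻¹
  have SsubL : ∀ a ∈ A, A.image (fun x => a * x⁻¹) ⊆ A * A⁻¹ := by
    intro a ha z hz
    rw [Finset.mem_image] at hz
    obtain ⟨x, hx, rfl⟩ := hz
    exact Finset.mul_mem_mul ha (Finset.inv_mem_inv hx)
  have SsubR : ∀ c ∈ A, A.image (fun x => x * c⁻¹) ⊆ A * A⁻¹ := by
    intro c hc z hz
    rw [Finset.mem_image] at hz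
    obtain ⟨x, hx, rfl⟩ := hz
    exact Finset.mul_mem_mul hx (Finset.inv_mem_inv hc)
  -- intersections of translates of size |A| inside A*A⁻¹ are big
  have big : ∀ (f₁ f₂ : G → G), Function.Injective f₁ → Function.Injective f₂ →
      A.image f₁ ⊆ A * A⁻¹ → A.image f₂ ⊆ A * A⁻¹ →
      A.card < 2 * ((A.image f₁) ∩ (A.image f₂)).card := by
    intro f₁ f₂ h₁ h₂ hs₁ hs₂
    have := inter_le _ _ _ hs₁ hs₂
    rw [Finset.card_image_of_injective _ h₁, Finset.card_image_of_injective _ h₂] at this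
    omega
  -- closure under multiplication
  have closure : ∀ {a b c d : G}, a ∈ A → b ∈ A → c ∈ A → d ∈ A →
      (a⁻¹ * b) * (c⁻¹ * d) ∈ A⁻¹ * A := by
    intro a b c d ha hb hc hd
    set S1 := A.image (fun x => a * x⁻¹) with hS1
    set S2 := A.image (fun x => b * x⁻¹) with hS2
    set R1 := A.image (fun x => x * c⁻¹) with hR1
    set R2 := A.image (fun x => x * d⁻¹) with hR2
    set T1 := (S1 ∩ S2).image (fun w => w⁻¹ * b) with hT1
    set T2 := (R1 ∩ R2).image (fun w => w * c) with hT2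
    have hT1c : T1.card = (S1 ∩ S2).card :=
      Finset.card_image_of_injective _ (fun x y hxy => inv_injective (mul_right_cancel hxy))
    have hT2c : T2.card = (R1 ∩ R2).card :=
      Finset.card_image_of_injective _ (fun x y hxy => mul_right_cancel hxy)
    have hT1A : T1 ⊆ A := by
      intro z hz
      rw [hT1, Finset.mem_image] at hz
      obtain ⟨w, hw, rfl⟩ := hz
      have hw2 := (Finset.mem_inter.mp hw).2
      rw [hS2, Finset.mem_image] at hw2
      obtain ⟨x, hx, rfl⟩ := hw2
      simpa using hx
    have hT2A : T2 ⊆ A := by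
      intro z hz
      rw [hT2, Finset.mem_image] at hz
      obtain ⟨w, hw, rfl⟩ := hz
      have hw1 := (Finset.mem_inter.mp hw).1
      rw [hR1, Finset.mem_image] at hw1
      obtain ⟨x, hx, rfl⟩ := hw1
      simpa using hx
    have hb1 : A.card < 2 * (S1 ∩ S2).card :=
      big _ _ (injL a) (injL b) (SsubL a ha) (SsubL b hb)
    have hb2 : A.card < 2 * (R1 ∩ R2).card :=
      big _ _ (injR c) (injR d) (SsubR c hc) (SsubR d hd)
    have hne : (T1 ∩ T2).Nonempty := by
      rw [← Finset.card_pos]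
      have := inter_le T1 T2 A hT1A hT2A
      omega
    obtain ⟨x, hx⟩ := hne
    obtain ⟨hx1, hx2⟩ := Finset.mem_inter.mp hx
    rw [hT1, Finset.mem_image] at hx1
    obtain ⟨w1, hw1, hw1x⟩ := hx1
    rw [hT2, Finset.mem_image] at hx2
    obtain ⟨w2, hw2, hw2x⟩ := hx2
    have hw1a := (Finset.mem_inter.mp hw1).1
    rw [hS1, Finset.mem_image] at hw1a
    obtain ⟨u, hu, hu'⟩ := hw1a
    have hw2d := (Finset.mem_inter.mp hw2).2
    rw [hR2, Finset.mem_image] at hw2d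
    obtain ⟨v, hv, hv'⟩ := hw2d
    have key : (a⁻¹ * b) * (c⁻¹ * d) = u⁻¹ * v := by
      have e1 : a⁻¹ * b * x⁻¹ = u⁻¹ := by
        rw [← hw1x, ← hu']
        group
      have e2 : x * (c⁻¹ * d) = v := by
        rw [← hw2x, ← hv']
        group
      calc (a⁻¹ * b) * (c⁻¹ * d) = (a⁻¹ * b * x⁻¹) * (x * (c⁻¹ * d)) := by group
        _ = u⁻¹ * v := by rw [e1, e2]
    rw [key]
    exact Finset.mul_mem_mul (Finset.inv_mem_inv hu) hv
  -- every element of A⁻¹*A is of the form x⁻¹*y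
  have memH : ∀ g ∈ A⁻¹ * A, ∃ x ∈ A, ∃ y ∈ A, x⁻¹ * y = g := by
    intro g hg
    rw [Finset.mem_mul] at hg
    obtain ⟨x', hx', y, hy, rfl⟩ := hg
    rw [Finset.mem_inv] at hx'
    obtain ⟨x, hx, rfl⟩ := hx'
    exact ⟨x, hx, y, hy, rfl⟩
  -- |A⁻¹ * A| < 2 |A|
  have hH2n : (A⁻¹ * A).card < 2 * A.card := by
    have hsum : (A ×ˢ A).card =
        ∑ g ∈ A⁻¹ * A, ((A ×ˢ A).filter (fun p => p.1⁻¹ * p.2 = g)).card := by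
      apply Finset.card_eq_sum_card_fiberwise
      intro p hp
      rw [Finset.mem_coe, Finset.mem_product] at hp
      exact Finset.mul_mem_mul (Finset.inv_mem_inv hp.1) hp.2
    have hfib : ∀ g ∈ A⁻¹ * A,
        A.card < 2 * ((A ×ˢ A).filter (fun p => p.1⁻¹ * p.2 = g)).card := by
      intro g hg
      obtain ⟨x, hx, y, hy, rfl⟩ := memH g hg
      have hsub : ((A.image (fun w => w * x⁻¹)) ∩ (A.image (fun w => w * y⁻¹))).image
          (fun w => (w * x, w * y)) ⊆ (A ×ˢ A).filter (fun p => p.1⁻¹ * p.2 = x⁻¹ * y) := by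
        intro z hz
        rw [Finset.mem_image] at hz
        obtain ⟨w, hw, rfl⟩ := hz
        obtain ⟨hw1, hw2⟩ := Finset.mem_inter.mp hw
        rw [Finset.mem_image] at hw1 hw2
        obtain ⟨u, hu, hu'⟩ := hw1
        obtain ⟨v, hv, hv'⟩ := hw2
        rw [Finset.mem_filter, Finset.mem_product]
        refine ⟨⟨?_, ?_⟩, by group⟩
        · have : w * x = u := by rw [← hu']; group
          rwa [this]
        · have : w * y = v := by rw [← hv']; group
          rwa [this]
      have hinjp : Function.Injective (fun w : G => (w * x, w * y)) := by
        intro u v huv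
        have := congrArg Prod.fst huv
        exact mul_right_cancel this
      have h1 : ((A.image (fun w => w * x⁻¹)) ∩ (A.image (fun w => w * y⁻¹))).card ≤
          ((A ×ˢ A).filter (fun p => p.1⁻¹ * p.2 = x⁻¹ * y)).card := by
        calc ((A.image (fun w => w * x⁻¹)) ∩ (A.image (fun w => w * y⁻¹))).card
            = (((A.image (fun w => w * x⁻¹)) ∩ (A.image (fun w => w * y⁻¹))).image
              (fun w => (w * x, w * y))).card := (Finset.card_image_of_injective _ hinjp).symm
          _ ≤ _ := Finset.card_le_card hsub
      have h2 : A.card < 2 * ((A.image (fun w => w * x⁻¹)) ∩ (A.image (fun w => w * y⁻¹))).card :=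
        big _ _ (injR x) (injR y) (SsubR x hx) (SsubR y hy)
      omega
    have hsum2 : (A⁻¹ * A).card * (A.card + 1) ≤ 2 * (A ×ˢ A).card := by
      rw [hsum, Finset.mul_sum]
      calc (A⁻¹ * A).card * (A.card + 1)
          = ∑ _g ∈ A⁻¹ * A, (A.card + 1) := by rw [Finset.sum_const, smul_eq_mul]
        _ ≤ ∑ g ∈ A⁻¹ * A, 2 * ((A ×ˢ A).filter (fun p => p.1⁻¹ * p.2 = g)).card :=
            Finset.sum_le_sum (fun g hg => by have := hfib g hg; omega)
    rw [Finset.card_product] at hsum2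
    nlinarith [hsum2, hn0]
  -- conjugation of H into A * A⁻¹
  have conj : ∀ g ∈ A⁻¹ * A, a₀ * g * a₀⁻¹ ∈ A * A⁻¹ := by
    intro g hg
    set L1 := A.image (fun x => x⁻¹ * a₀) with hL1
    set L2 := A.image (fun x => x⁻¹ * (a₀ * g)) with hL2
    have hL1s : L1 ⊆ A⁻¹ * A := by
      intro z hz
      rw [hL1, Finset.mem_image] at hz
      obtain ⟨x, hx, rfl⟩ := hz
      exact Finset.mul_mem_mul (Finset.inv_mem_inv hx) ha₀
    have hL2s : L2 ⊆ A⁻¹ * A := by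
      intro z hz
      rw [hL2, Finset.mem_image] at hz
      obtain ⟨x, hx, rfl⟩ := hz
      obtain ⟨c, hc, d, hd, rfl⟩ := memH g hg
      have : x⁻¹ * (a₀ * (c⁻¹ * d)) = (x⁻¹ * a₀) * (c⁻¹ * d) := by group
      rw [this]
      exact closure hx ha₀ hc hd
    have hne : (L1 ∩ L2).Nonempty := by
      rw [← Finset.card_pos, hL1, hL2]
      have := inter_le L1 L2 (A⁻¹ * A) hL1s hL2s
      rw [hL1, hL2, Finset.card_image_of_injective _ (injI a₀),
        Finset.card_image_of_injective _ (injI (a₀ * g))] at this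
      omega
    obtain ⟨w, hw⟩ := hne
    obtain ⟨hw1, hw2⟩ := Finset.mem_inter.mp hw
    rw [hL1, Finset.mem_image] at hw1
    obtain ⟨u, hu, hu'⟩ := hw1
    rw [hL2, Finset.mem_image] at hw2
    obtain ⟨v, hv, hv'⟩ := hw2
    have key : a₀ * g * a₀⁻¹ = v * u⁻¹ := by
      have e1 : u * w = a₀ := by rw [← hu']; group
      have e2 : v * w = a₀ * g := by rw [← hv']; group
      calc a₀ * g * a₀⁻¹ = (v * w) * (u * w)⁻¹ := by rw [e1, e2]
        _ = v * u⁻¹ := by group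
    rw [key]
    exact Finset.mul_mem_mul hv (Finset.inv_mem_inv hu)
  -- |A⁻¹A| ≤ |AA⁻¹|
  have hHm : (A⁻¹ * A).card ≤ (A * A⁻¹).card := by
    apply Finset.card_le_card_of_injOn (fun g => a₀ * g * a₀⁻¹) (fun g hg => conj g hg)
    intro u _ v _ huv
    simpa using huv
  refine ⟨⟨{ carrier := ↑(A⁻¹ * A)
             mul_mem' := ?_
             one_mem' := ?_
             inv_mem' := ?_ }, rfl⟩, ?_, ?_⟩
  · intro x y hx hy
    rw [Finset.mem_coe] at *
    obtain ⟨a, ha, b, hb, rfl⟩ := memH x hx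
    obtain ⟨c, hc, d, hd, rfl⟩ := memH y hy
    exact closure ha hb hc hd
  · rw [Finset.mem_coe]
    have : (1 : G) = a₀⁻¹ * a₀ := by group
    rw [this]
    exact Finset.mul_mem_mul (Finset.inv_mem_inv ha₀) ha₀
  · intro x hx
    rw [Finset.mem_coe] at *
    obtain ⟨a, ha, b, hb, rfl⟩ := memH x hx
    have : (a⁻¹ * b)⁻¹ = b⁻¹ * a := by group
    rw [this]
    exact Finset.mul_mem_mul (Finset.inv_mem_inv hb) ha
  · calc ((A⁻¹ * A).card : ℝ) ≤ ((A * A⁻¹).card : ℝ) := by exact_mod_cast hHm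
      _ ≤ K * A.card := h
  · refine ⟨a₀, fun x hx => ?_⟩
    rw [Finset.mem_coe] at hx
    refine ⟨a₀⁻¹ * x, ?_, by simp [smul_eq_mul]⟩
    rw [Finset.mem_coe]
    exact Finset.mul_mem_mul (Finset.inv_mem_inv ha₀) hx
end

section
/- Let G be a group and A a nonempty finite subset of G with |AA^{-1}| < 1.5|A|. Then (A^{-1}A)(A^{-1}A) = A^{-1}A. -/
open Finset Pointwise

theorem stmt4 {G : Type*} [Group G] [DecidableEq G] (A : Finset G)
    (hA : A.Nonempty) (h : ((A * A⁻¹).card : ℝ) < 1.5 * A.card) :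
    (A⁻¹ * A) * (A⁻¹ * A) = A⁻¹ * A := by
  have hd : 2 * (A * A⁻¹).card < 3 * A.card := by
    have : ((2 * (A * A⁻¹).card : ℕ) : ℝ) < ((3 * A.card : ℕ) : ℝ) := by
      push_cast; nlinarith
    exact_mod_cast this
  -- key lemma
  have key : ∀ x ∈ A⁻¹ * A, A.card < 2 * (A ∩ (A * {x})).card := by
    intro x hx
    obtain ⟨u, hu, a, ha, rfl⟩ := mem_mul.1 hx
    obtain ⟨b, hb, rfl⟩ := mem_inv.1 hu
    have hunion : A ∪ A * {b⁻¹ * a} = (A * {a⁻¹} ∪ A * {b⁻¹}) * {a} := by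
      rw [union_mul, mul_assoc, mul_assoc, singleton_mul_singleton,
        singleton_mul_singleton, inv_mul_cancel, singleton_one, mul_one]
    have hsub : A * {a⁻¹} ∪ A * {b⁻¹} ⊆ A * A⁻¹ := by
      apply union_subset <;> exact mul_subset_mul_left
        (singleton_subset_iff.2 (inv_mem_inv ‹_›))
    have h1 : (A ∪ A * {b⁻¹ * a}).card ≤ (A * A⁻¹).card := by
      rw [hunion, card_mul_singleton]
      exact card_le_card hsub
    have h2 := card_union_add_card_inter A (A * {b⁻¹ * a})
    rw [card_mul_singleton] at h2
    omega
  have hone : (1 : G) ∈ A⁻¹ * A := by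
    obtain ⟨a, ha⟩ := hA
    exact mem_mul.2 ⟨a⁻¹, inv_mem_inv ha, a, ha, inv_mul_cancel a⟩
  apply Subset.antisymm
  · intro z hz
    obtain ⟨x, hx, y, hy, rfl⟩ := mem_mul.1 hz
    have hyinv : y⁻¹ ∈ A⁻¹ * A := by
      obtain ⟨u, hu, v, hv, rfl⟩ := mem_mul.1 hy
      obtain ⟨w, hw, rfl⟩ := mem_inv.1 hu
      rw [mul_inv_rev, inv_inv]
      exact mem_mul.2 ⟨v⁻¹, inv_mem_inv hv, w, hw, rfl⟩
    have k1 := key x hx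
    have k2 := key y⁻¹ hyinv
    have hne : ((A ∩ (A * {x})) ∩ (A ∩ (A * {y⁻¹}))).Nonempty := by
      rw [← card_pos]
      have hcup : ((A ∩ (A * {x})) ∪ (A ∩ (A * {y⁻¹}))).card ≤ A.card :=
        card_le_card (union_subset inter_subset_left inter_subset_left)
      have := card_union_add_card_inter (A ∩ (A * {x})) (A ∩ (A * {y⁻¹}))
      omega
    obtain ⟨c, hc⟩ := hne
    have hc1 : c ∈ A * {x} := (mem_inter.1 (mem_inter.1 hc).1).2
    have hc2 : c ∈ A * {y⁻¹} := (mem_inter.1 (mem_inter.1 hc).2).2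
    obtain ⟨a, ha, x', hx', hax⟩ := mem_mul.1 hc1
    obtain ⟨b, hb, y', hy', hby⟩ := mem_mul.1 hc2
    rw [mem_singleton] at hx' hy'
    rw [hx'] at hax
    rw [hy'] at hby
    have hxeq : x = a⁻¹ * c := by rw [← hax]; group
    have hyeq : y = c⁻¹ * b := by
      have h5 : y⁻¹ = b⁻¹ * c := by rw [← hby]; group
      rw [← inv_inv y, h5]; group
    rw [hxeq, hyeq]
    refine mem_mul.2 ⟨a⁻¹, inv_mem_inv ha, b, hb, ?_⟩
    group
  · exact subset_mul_left _ hone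
end

section
/- Let G be a group, H a finite subgroup, A a finite subset with |AA^{-1}| ≤ (2 - ε)|A| for some ε ∈ (0,1], and suppose AHA^{-1} = AA^{-1} and |AA^{-1}| ≥ 2|AH| - |H|. Then |H| ≥ ε|A|, and A meets at most 2/ε - 1 left cosets of H; in particular A ⊆ XH for some set X with |X| ≤ 2/ε. -/
open Finset Pointwise

theorem stmt11 {G : Type*} [Group G] [Fintype G] [DecidableEq G]
    (H : Subgroup G) [DecidableEq (G ⧸ H)] [DecidablePred (· ∈ H)] (A : Finset G) (ε : ℝ)
    (hA : A.Nonempty) (hε : 0 < ε) (hε1 : ε ≤ 1)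
    (hdoub : ((A * A⁻¹).card : ℝ) ≤ (2 - ε) * A.card)
    (hAHA : (A : Set G) * (H : Set G) * (A : Set G)⁻¹ = (↑(A * A⁻¹) : Set G))
    (hineq : 2 * ((A * (H : Set G).toFinset).card : ℝ) - (Nat.card H : ℝ) ≤
      ((A * A⁻¹).card : ℝ)) :
    ε * A.card ≤ (Nat.card H : ℝ) ∧
    ((A.image (QuotientGroup.mk : G → G ⧸ H)).card : ℝ) ≤ 2 / ε - 1 ∧
    ∃ X : Finset G, (X.card : ℝ) ≤ 2 / ε ∧ (A : Set G) ⊆ ↑X * (H : Set G) := by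
  classical
  set Hf : Finset G := (H : Set G).toFinset with hHf
  set mkq : G → G ⧸ H := QuotientGroup.mk with hmkq
  have hmem : ∀ (x : G) (q : G ⧸ H), x ∈ q.out • Hf ↔ q = mkq x := by
    intro x q
    rw [Finset.mem_smul_finset]
    constructor
    · rintro ⟨y, hy, rfl⟩
      rw [hHf, Set.mem_toFinset] at hy
      have h0 : mkq q.out = q := QuotientGroup.out_eq' q
      have : mkq q.out = mkq (q.out • y) := QuotientGroup.eq.2 (by simpa using hy)
      rwa [h0] at this
    · intro hq
      refine ⟨q.out⁻¹ * x, ?_, by simp⟩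
      rw [hHf, Set.mem_toFinset]
      have : mkq q.out = mkq x := by rw [hmkq, QuotientGroup.out_eq', hq]
      exact QuotientGroup.eq.1 this
  have hunion : A * Hf = (A.image mkq).biUnion (fun q => q.out • Hf) := by
    ext x
    simp only [Finset.mem_biUnion, Finset.mem_image]
    constructor
    · intro hx
      obtain ⟨a, ha, s, hs, rfl⟩ := Finset.mem_mul.1 hx
      refine ⟨mkq a, ⟨a, ha, rfl⟩, (hmem _ _).2 ?_⟩
      rw [hHf, Set.mem_toFinset] at hs
      exact QuotientGroup.eq.2 (by simpa using hs)
    · rintro ⟨q, ⟨a, ha, rfl⟩, hx⟩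
      have h1 : mkq a = mkq x := (hmem _ _).1 hx
      have h2 : a⁻¹ * x ∈ H := QuotientGroup.eq.1 h1
      exact Finset.mem_mul.2 ⟨a, ha, a⁻¹ * x, by rw [hHf, Set.mem_toFinset]; exact h2,
        by group⟩
  have hcardH : (Hf.card : ℝ) = (Nat.card H : ℝ) := by
    rw [hHf, Set.toFinset_card, Nat.card_eq_fintype_card]
    norm_cast
  have hdisj : ∀ q1 ∈ A.image mkq, ∀ q2 ∈ A.image mkq, q1 ≠ q2 →
      Disjoint (q1.out • Hf) (q2.out • Hf) := by
    intro q1 _ q2 _ hne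
    refine Finset.disjoint_left.2 fun x hx1 hx2 => hne ?_
    rw [(hmem _ _).1 hx1, (hmem _ _).1 hx2]
  have hcard : (A * Hf).card = (A.image mkq).card * Hf.card := by
    rw [hunion, Finset.card_biUnion hdisj]
    simp [Finset.card_smul_finset]
  -- basic facts
  have hone : (1 : G) ∈ Hf := by rw [hHf, Set.mem_toFinset]; exact H.one_mem
  have hAsub : A ⊆ A * Hf := Finset.subset_mul_left A hone
  have hAle : (A.card : ℝ) ≤ ((A * Hf).card : ℝ) := by
    exact_mod_cast Finset.card_le_card hAsub
  set k : ℕ := (A.image mkq).card with hk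
  have hk1 : 1 ≤ k := Finset.card_pos.2 (hA.image _)
  have hH1 : 1 ≤ Hf.card := Finset.card_pos.2 ⟨1, hone⟩
  have hHpos : (0 : ℝ) < (Nat.card H : ℝ) := by
    rw [← hcardH]; exact_mod_cast hH1
  have hm : ((A * Hf).card : ℝ) = (k : ℝ) * (Nat.card H : ℝ) := by
    rw [hcard, ← hcardH]; push_cast; ring
  -- ε * |A*Hf| ≤ |H|
  have key : ε * ((A * Hf).card : ℝ) ≤ (Nat.card H : ℝ) := by
    have h2 : ((A * A⁻¹).card : ℝ) ≤ (2 - ε) * ((A * Hf).card : ℝ) := by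
      refine hdoub.trans ?_
      have : (0:ℝ) ≤ 2 - ε := by linarith
      nlinarith
    nlinarith
  have goal1 : ε * A.card ≤ (Nat.card H : ℝ) := by
    refine le_trans ?_ key
    have : (0:ℝ) ≤ ε := hε.le
    nlinarith
  have hkle : (k : ℝ) ≤ 1 / ε := by
    have : ε * ((k : ℝ) * (Nat.card H : ℝ)) ≤ (Nat.card H : ℝ) := hm ▸ key
    rw [le_div_iff₀ hε]
    nlinarith
  have h1e : (1:ℝ)/ε ≤ 2/ε - 1 := by
    rw [div_sub' (ne_of_gt hε), div_le_div_iff₀ hε hε]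
    nlinarith
  refine ⟨goal1, hkle.trans h1e, ?_⟩
  refine ⟨(A.image mkq).image Quotient.out, ?_, ?_⟩
  · have : ((A.image mkq).image Quotient.out).card ≤ k := Finset.card_image_le
    calc (((A.image mkq).image Quotient.out).card : ℝ) ≤ (k : ℝ) := by exact_mod_cast this
      _ ≤ 1/ε := hkle
      _ ≤ 2/ε := by rw [div_le_div_iff₀ hε hε]; nlinarith
  · intro a ha
    have haA : a ∈ A := by exact_mod_cast ha
    have hgX : (mkq a).out ∈ (A.image mkq).image Quotient.out :=
      Finset.mem_image.2 ⟨mkq a, Finset.mem_image.2 ⟨a, haA, rfl⟩, rfl⟩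
    have hmk : mkq ((mkq a).out) = mkq a := QuotientGroup.out_eq' _
    have hH' : ((mkq a).out)⁻¹ * a ∈ H := QuotientGroup.eq.1 hmk
    exact ⟨(mkq a).out, by exact_mod_cast hgX, ((mkq a).out)⁻¹ * a, hH', by group⟩
end

section
/- Let G be a group, H a subgroup, and A a finite subset such that A intersects R distinct left cosets of H and AHA^{-1} = AA^{-1}. Then |AA^{-1}| ≥ R|H|. -/
open Finset Pointwise

theorem stmt12 {G : Type*} [Group G] [Fintype G] [DecidableEq G]
    (H : Subgroup G) [DecidableEq (G ⧸ H)] (A : Finset G) (R : ℕ)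
    (hR : (A.image (QuotientGroup.mk : G → G ⧸ H)).card = R)
    (hAHA : (A : Set G) * (H : Set G) * (A : Set G)⁻¹ = (↑(A * A⁻¹) : Set G)) :
    R * Nat.card H ≤ (A * A⁻¹).card := by
  classical
  rcases A.eq_empty_or_nonempty with hA | ⟨a₀, ha₀⟩
  · subst hA; simp at hR; subst hR; simp
  set T := A.image (QuotientGroup.mk : G → G ⧸ H) with hT
  have hrepex : ∀ q : G ⧸ H, q ∈ T → ∃ a, a ∈ A ∧ (QuotientGroup.mk a : G ⧸ H) = q := by
    intro q hq
    obtain ⟨a, ha, haq⟩ := Finset.mem_image.mp hq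
    exact ⟨a, ha, haq⟩
  choose rep hrepA hrepq using hrepex
  set rep' : G ⧸ H → G := fun q => if hq : q ∈ T then rep q hq else 1 with hrep'
  have hrep'A : ∀ q ∈ T, rep' q ∈ A := fun q hq => by simp [hrep', hq, hrepA]
  have hrep'q : ∀ q ∈ T, (QuotientGroup.mk (rep' q) : G ⧸ H) = q := fun q hq => by
    simp [hrep', hq, hrepq]
  set HF := (H : Set G).toFinset with hHF
  have key : (T ×ˢ HF).card ≤ (A * A⁻¹).card := by
    apply Finset.card_le_card_of_injOn (fun p => rep' p.1 * p.2 * a₀⁻¹)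
    · rintro ⟨q, h⟩ hp
      rw [Finset.mem_coe, Finset.mem_product] at hp
      have hh : h ∈ (H : Set G) := by simpa [hHF] using hp.2
      have : rep' q * h * a₀⁻¹ ∈ (A : Set G) * (H : Set G) * (A : Set G)⁻¹ :=
        Set.mul_mem_mul (Set.mul_mem_mul (by exact_mod_cast hrep'A q hp.1) hh)
          (Set.inv_mem_inv.mpr (by exact_mod_cast ha₀))
      rw [hAHA] at this
      exact_mod_cast this
    · rintro ⟨q, h⟩ hp ⟨q', h'⟩ hp' heq
      simp only [Finset.mem_coe, Finset.mem_product] at hp hp'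
      have hh : h ∈ H := by simpa [hHF] using hp.2
      have hh' : h' ∈ H := by simpa [hHF] using hp'.2
      simp only at heq
      have heq2 : rep' q * h = rep' q' * h' := by
        have := mul_right_cancel heq
        exact this
      have hq : q = q' := by
        have : (QuotientGroup.mk (rep' q * h) : G ⧸ H) = QuotientGroup.mk (rep' q' * h') := by
          rw [heq2]
        rw [QuotientGroup.mk_mul_of_mem _ hh, QuotientGroup.mk_mul_of_mem _ hh'] at this
        rw [← hrep'q q hp.1, ← hrep'q q' hp'.1, this]
      subst hq
      have : h = h' := mul_left_cancel heq2
      simp [this]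
  have hcard : (T ×ˢ HF).card = R * Nat.card H := by
    rw [Finset.card_product, hR]
    congr 1
    simp [hHF, Set.toFinset_card, Nat.card_eq_fintype_card]
  rw [← hcard]
  exact key
end

section
/- Let G be a finite group, H ≤ G a subgroup, A ⊆ G, x ∈ G, and suppose |A ∩ xH| ≥ c|A| for some c > 0. If A meets R distinct left cosets of H, then |AA^{-1}| ≥ R·c|A|; hence R ≤ |AA^{-1}|/(c|A|). -/
open Finset Pointwise

theorem stmt14 {G : Type*} [Group G] [Fintype G] [DecidableEq G]
    (H : Subgroup G) [DecidableEq (G ⧸ H)] [DecidablePred (· ∈ H)]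
    (A : Finset G) (x : G) (c : ℝ) (hc : 0 < c)
    (hcap : c * A.card ≤ ((A ∩ x • (H : Set G).toFinset).card : ℝ)) (R : ℕ)
    (hR : (A.image (QuotientGroup.mk : G → G ⧸ H)).card = R) :
    (R : ℝ) * (c * A.card) ≤ ((A * A⁻¹).card : ℝ) ∧
    (R : ℝ) ≤ ((A * A⁻¹).card : ℝ) / (c * A.card) := by
  set B := A ∩ x • (H : Set G).toFinset with hB
  -- choose representatives
  have hrep : ∀ q ∈ A.image (QuotientGroup.mk : G → G ⧸ H),
      ∃ a ∈ A, (QuotientGroup.mk a : G ⧸ H) = q := by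
    intro q hq
    simpa using Finset.mem_image.1 hq
  classical
  let rep : G ⧸ H → G := fun q =>
    if h : ∃ a ∈ A, (QuotientGroup.mk a : G ⧸ H) = q then h.choose else 1
  have hrepA : ∀ q ∈ A.image (QuotientGroup.mk : G → G ⧸ H), rep q ∈ A := by
    intro q hq
    have h := hrep q hq
    simp only [rep, dif_pos h]
    exact h.choose_spec.1
  have hrepq : ∀ q ∈ A.image (QuotientGroup.mk : G → G ⧸ H),
      (QuotientGroup.mk (rep q) : G ⧸ H) = q := by
    intro q hq
    have h := hrep q hq
    simp only [rep, dif_pos h]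
    exact h.choose_spec.2
  have hBmem : ∀ t ∈ B, ∃ h ∈ H, t = x * h := by
    intro t ht
    have ht2 := (Finset.mem_inter.1 ht).2
    rw [Finset.mem_smul_finset] at ht2
    obtain ⟨h, hh, rfl⟩ := ht2
    exact ⟨h, by simpa using hh, rfl⟩
  -- key injection
  have key : R * B.card ≤ (A * A⁻¹).card := by
    rw [← hR, ← Finset.card_product]
    apply Finset.card_le_card_of_injOn (fun p => rep p.1 * p.2⁻¹)
    · rintro ⟨q, t⟩ hp
      rw [Finset.mem_coe, Finset.mem_product] at hp
      exact Finset.mul_mem_mul (hrepA q hp.1)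
        (Finset.inv_mem_inv (Finset.mem_inter.1 hp.2).1)
    · rintro ⟨q, t⟩ hp ⟨q', t'⟩ hp' heq
      simp only [Finset.mem_coe, Finset.mem_product] at hp hp'
      obtain ⟨h, hh, rfl⟩ := hBmem t hp.2
      obtain ⟨h', hh', rfl⟩ := hBmem t' hp'.2
      simp only at heq
      have hq : q = q' := by
        rw [← hrepq q hp.1, ← hrepq q' hp'.1]
        have e2 : rep q * h⁻¹ = rep q' * h'⁻¹ := by
          have e : rep q * h⁻¹ * x⁻¹ = rep q' * h'⁻¹ * x⁻¹ := by
            simpa [mul_inv_rev, mul_assoc] using heq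
          exact mul_right_cancel e
        have h2 : (rep q)⁻¹ * rep q' = h⁻¹ * h' := by
          have : rep q' = rep q * h⁻¹ * h' := by
            calc rep q' = rep q' * h'⁻¹ * h' := by group
              _ = rep q * h⁻¹ * h' := by rw [e2]
          rw [this]; group
        exact QuotientGroup.eq.2 (h2 ▸ H.mul_mem (H.inv_mem hh) hh')
      subst hq
      have : (x * h)⁻¹ = (x * h')⁻¹ := by
        have := mul_left_cancel heq
        exact this
      have := inv_injective this
      simp [this]
  have hBpos : (R : ℝ) * (c * A.card) ≤ ((A * A⁻¹).card : ℝ) := by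
    calc (R : ℝ) * (c * A.card) ≤ (R : ℝ) * B.card := by
          apply mul_le_mul_of_nonneg_left hcap (Nat.cast_nonneg R)
      _ ≤ ((A * A⁻¹).card : ℝ) := by exact_mod_cast key
  refine ⟨hBpos, ?_⟩
  rcases eq_or_ne R 0 with rfl | hR0
  · simp only [Nat.cast_zero]
    apply div_nonneg (Nat.cast_nonneg _)
    positivity
  · have hApos : (0 : ℝ) < c * A.card := by
      have : A.Nonempty := by
        by_contra h
        rw [Finset.not_nonempty_iff_eq_empty] at h
        subst h
        simp at hR
        exact hR0 hR.symm
      have : (0 : ℝ) < A.card := by exact_mod_cast Finset.card_pos.2 this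
      positivity
    rw [le_div_iff₀ hApos]
    exact hBpos
end

section
/- Let G be a group and A a nonempty finite subset with |AA^{-1}| < 2|A|. Then for every x, y ∈ A^{-1}A, one has xy ∈ (A^{-1}A)(A^{-1}A), and moreover if additionally |AA^{-1}| < 1.5|A| then A^{-1}A is closed under multiplication. -/
open Finset Pointwise

lemma stmt16_key {G : Type*} [Group G] [DecidableEq G] (A : Finset G)
    (h : 2 * (A * A⁻¹).card < 3 * A.card) {x : G} (hx : x ∈ A⁻¹ * A) :
    A.card < 2 * (A.filter (fun c => c * x ∈ A)).card := by
  rw [mem_mul] at hx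
  obtain ⟨a', ha', b, hb, hab⟩ := hx
  rw [mem_inv] at ha'
  obtain ⟨a, ha, rfl⟩ := ha'
  set S := A.image (· * a⁻¹) with hS
  set T := A.image (· * b⁻¹) with hT
  have hSc : S.card = A.card := card_image_of_injective _ (mul_left_injective _)
  have hTc : T.card = A.card := card_image_of_injective _ (mul_left_injective _)
  have hsub : S ∪ T ⊆ A * A⁻¹ := by
    intro z hz
    rcases mem_union.1 hz with hz | hz <;>
    · simp only [hS, hT, mem_image] at hz
      obtain ⟨c, hc, rfl⟩ := hz
      exact mul_mem_mul hc (inv_mem_inv (by assumption))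
  have hunion : (S ∪ T).card ≤ (A * A⁻¹).card := card_le_card hsub
  have hie : (S ∩ T).card + (S ∪ T).card = S.card + T.card :=
    card_inter_add_card_union S T
  have himg : (S ∩ T).image (· * a) ⊆ A.filter (fun c => c * x ∈ A) := by
    intro z hz
    simp only [mem_image] at hz
    obtain ⟨w, hw, rfl⟩ := hz
    have hwS := (mem_inter.1 hw).1
    have hwT := (mem_inter.1 hw).2
    simp only [hS, mem_image] at hwS
    simp only [hT, mem_image] at hwT
    obtain ⟨c, hc, rfl⟩ := hwS
    rw [mem_filter]
    constructor
    · simpa using hc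
    · obtain ⟨d, hd, hde⟩ := hwT
      have : c * a⁻¹ * a * x = d := by
        rw [← hab]
        calc c * a⁻¹ * a * (a⁻¹ * b) = c * a⁻¹ * b := by group
          _ = d * b⁻¹ * b := by rw [← hde]
          _ = d := by group
      rw [this]; exact hd
  have hic : (S ∩ T).card ≤ (A.filter (fun c => c * x ∈ A)).card := by
    calc (S ∩ T).card = ((S ∩ T).image (· * a)).card :=
          (card_image_of_injective _ (mul_left_injective _)).symm
      _ ≤ _ := card_le_card himg
  omega

theorem stmt16 {G : Type*} [Group G] [DecidableEq G] (A : Finset G)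
    (hA : A.Nonempty) (h : (A * A⁻¹).card < 2 * A.card) :
    (∀ x ∈ A⁻¹ * A, ∀ y ∈ A⁻¹ * A, x * y ∈ (A⁻¹ * A) * (A⁻¹ * A)) ∧
    (((A * A⁻¹).card : ℝ) < 1.5 * A.card →
      ∀ x ∈ A⁻¹ * A, ∀ y ∈ A⁻¹ * A, x * y ∈ A⁻¹ * A) := by
  constructor
  · intro x hx y hy
    exact mul_mem_mul hx hy
  · intro h15 x hx y hy
    have hnat : 2 * (A * A⁻¹).card < 3 * A.card := by
      have : (2 * (A * A⁻¹).card : ℝ) < 3 * A.card := by linarith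
      exact_mod_cast this
    have hx' := stmt16_key A hnat hx
    have hy' := stmt16_key A hnat hy
    set U := A.filter (fun c => c * x ∈ A) with hU
    set V := A.filter (fun c => c * y ∈ A) with hV
    have hUA : U.image (· * x) ⊆ A := by
      intro z hz
      simp only [hU, mem_image, mem_filter] at hz
      obtain ⟨c, ⟨_, hc2⟩, rfl⟩ := hz
      exact hc2
    have hVA : V ⊆ A := filter_subset _ _
    have hUc : (U.image (· * x)).card = U.card :=
      card_image_of_injective _ (mul_left_injective _)
    have hne : ((U.image (· * x)) ∩ V).Nonempty := by
      rw [← card_pos]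
      have h1 : ((U.image (· * x)) ∪ V).card ≤ A.card :=
        card_le_card (union_subset hUA hVA)
      have h2 := card_inter_add_card_union (U.image (· * x)) V
      omega
    obtain ⟨e, he⟩ := hne
    have heU := (mem_inter.1 he).1
    have heV := (mem_inter.1 he).2
    simp only [mem_image] at heU
    obtain ⟨c, hc, rfl⟩ := heU
    simp only [hU, mem_filter] at hc
    simp only [hV, mem_filter] at heV
    have : x * y = c⁻¹ * (c * x * y) := by group
    rw [this]
    exact mul_mem_mul (inv_mem_inv hc.1) heV.2
end
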